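/- For every M ≥ 1, pairwise distinct μ₁,…,μ_M ∈ D, and λ ∈ D distinct from all μ_j, the following commutation relation holds: v⁺(λ) B_M(μ₁,…,μ_M) = (−1)^M B_M(μ₁,…,μ_M) v⁺(λ) + 2 Σ_{j=1}^{M} (−1)^j ((X⁺(λ) − X⁺(μ_j))/(λ − μ_j)) B_{M−1}^{(j)}(μ₁,…,μ_M). -/

import Mathlib

/-- The creation operators B_M of the osp(1|2) Gaudin model, defined by the
recurrence B_M(μ₁,…,μ_M) = v⁺(μ₁)B_{M−1}(μ₂,…,μ_M)
+ 2X⁺(μ₁)Σ_{j=2}^{M} ((−1)^j/(μ₁−μ_j)) B_{M−2}^{(j)}(μ₂,…,μ_M). -/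
noncomputable def Bop {A : Type*} [Ring A] [Algebra ℂ A] (X v : ℂ → A) : List ℂ → A
  | [] => 1
  | μ :: rest => v μ * Bop X v rest +
      (2:ℂ) • (X μ * ∑ i : Fin rest.length,
        (((-1:ℂ)^(i:ℕ) / (μ - rest.get i)) • Bop X v (rest.eraseIdx i)))
termination_by l => l.length
decreasing_by
  all_goals simp [List.length_eraseIdx] <;> omega



section
variable {A : Type*} [Ring A] [Algebra ℂ A]

theorem mul_sum_smul (a : A) {ι : Type*} (s : Finset ι) (c : ι → ℂ) (f : ι → A) :
    a * (∑ i ∈ s, c i • f i) = ∑ i ∈ s, c i • (a * f i) := by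
  rw [Finset.mul_sum]
  exact Finset.sum_congr rfl fun i _ => (mul_smul_comm _ _ _)

theorem sum_smul_mul (a : A) {ι : Type*} (s : Finset ι) (c : ι → ℂ) (f : ι → A) :
    (∑ i ∈ s, c i • f i) * a = ∑ i ∈ s, c i • (f i * a) := by
  rw [Finset.sum_mul]
  exact Finset.sum_congr rfl fun i _ => (smul_mul_assoc _ _ _)
end

theorem eraseIdx_swap' {α : Type*} : ∀ (i j : ℕ), i ≤ j → ∀ (l : List α),
    (l.eraseIdx i).eraseIdx j = (l.eraseIdx (j+1)).eraseIdx i := by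
  intro i
  induction i with
  | zero => intro j _ l; cases l with
    | nil => simp
    | cons a t => simp [List.eraseIdx]
  | succ i ih =>
    intro j hij l
    obtain ⟨j', rfl⟩ : ∃ j', j = j' + 1 := ⟨j - 1, by omega⟩
    cases l with
    | nil => simp
    | cons a t => simp only [List.eraseIdx]; rw [ih j' (by omega) t]

def erase2' (l : List ℂ) (i j : ℕ) : List ℂ := (l.eraseIdx (max i j)).eraseIdx (min i j)

def theta' (i j : ℕ) : ℕ := if j < i then 1 else 0

theorem erase2'_comm (l : List ℂ) (i j : ℕ) : erase2' l i j = erase2' l j i := by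
  simp [erase2', Nat.max_comm, Nat.min_comm]

theorem reindex {M : Type*} [AddCommMonoid M] (t : List ℂ) (p : Fin t.length)
    (g : ℕ → ℂ → List ℂ → M) :
    ∑ k : Fin ((t.eraseIdx (p:ℕ)).length),
      g (k:ℕ) ((t.eraseIdx (p:ℕ)).get k) ((t.eraseIdx (p:ℕ)).eraseIdx (k:ℕ))
    = ∑ j ∈ Finset.univ.erase p, g ((j:ℕ) - theta' (j:ℕ) (p:ℕ)) (t.get j)
        (erase2' t (p:ℕ) (j:ℕ)) := by
  have hp : (p:ℕ) < t.length := p.isLt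
  have hlen : (t.eraseIdx (p:ℕ)).length = t.length - 1 := by
    simp [List.length_eraseIdx, hp]
  refine Finset.sum_bij (i := fun (k : Fin ((t.eraseIdx (p:ℕ)).length)) _ =>
      (⟨if (k:ℕ) < (p:ℕ) then (k:ℕ) else (k:ℕ)+1, by
        have h1 := k.isLt
        have h2 : (t.eraseIdx (p:ℕ)).length = t.length - 1 := by
          simp [List.length_eraseIdx, p.isLt]
        split <;> omega⟩ : Fin t.length)) ?_ ?_ ?_ ?_
  · intro k _
    have h1 := k.isLt
    simp only [Finset.mem_erase, Finset.mem_univ, and_true]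
    intro h
    have h2 := congrArg Fin.val h
    simp only at h2
    split at h2 <;> omega
  · intro k1 _ k2 _ h
    have h2 := congrArg Fin.val h
    simp only at h2
    apply Fin.ext
    split at h2 <;> split at h2 <;> omega
  · intro b hb
    simp only [Finset.mem_erase, Finset.mem_univ, and_true] at hb
    have hb' : (b:ℕ) ≠ (p:ℕ) := fun h => hb (Fin.ext h)
    have hbl := b.isLt
    refine ⟨⟨(b:ℕ) - theta' (b:ℕ) (p:ℕ), by unfold theta'; split <;> omega⟩,
      Finset.mem_univ _, ?_⟩
    apply Fin.ext
    simp only [theta', Fin.val_mk]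
    split <;> split <;> omega
  · intro k _
    have hk := k.isLt
    by_cases h : (k:ℕ) < (p:ℕ)
    · have e1 : ((⟨if (k:ℕ) < (p:ℕ) then (k:ℕ) else (k:ℕ)+1, by
          split <;> omega⟩ : Fin t.length) : ℕ) = (k:ℕ) := by simp [h]
      congr 1
      · rw [e1]; simp only [theta']; split <;> omega
      · rw [List.get_eq_getElem, List.get_eq_getElem, List.getElem_eraseIdx]
        simp only [e1]
        simp [h]
      · rw [e1]
        unfold erase2'
        rw [Nat.max_eq_left (by omega), Nat.min_eq_right (by omega)]
    · push_neg at h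
      have e1 : ((⟨if (k:ℕ) < (p:ℕ) then (k:ℕ) else (k:ℕ)+1, by
          split <;> omega⟩ : Fin t.length) : ℕ) = (k:ℕ)+1 := by
        simp [Nat.not_lt.mpr h]
      congr 1
      · rw [e1]; simp only [theta']; split <;> omega
      · rw [List.get_eq_getElem, List.get_eq_getElem, List.getElem_eraseIdx]
        rw [dif_neg (by omega)]
        congr 1
        rw [e1]
      · rw [e1]
        unfold erase2'
        rw [Nat.max_eq_right (by omega), Nat.min_eq_left (by omega)]
        exact eraseIdx_swap' (p:ℕ) (k:ℕ) h t

theorem scalar_eq (i j : ℕ) (h : i ≠ j) (a b : ℂ) :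
    ((-1:ℂ)^i / a) * ((-1:ℂ)^((j - theta' j i)+1) / b)
      = ((-1:ℂ)^(j+2) / b) * ((-1:ℂ)^(i - theta' i j) / a) := by
  rcases h.lt_or_gt with hlt | hlt
  · simp only [theta']
    rw [if_pos hlt, if_neg (by omega)]
    obtain ⟨j', rfl⟩ : ∃ j', j = j' + 1 := ⟨j-1, by omega⟩
    simp only [Nat.add_sub_cancel, Nat.sub_zero]
    ring
  · simp only [theta']
    rw [if_neg (by omega), if_pos hlt]
    obtain ⟨i', rfl⟩ : ∃ i', i = i' + 1 := ⟨i-1, by omega⟩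
    simp only [Nat.add_sub_cancel, Nat.sub_zero]
    ring

theorem DS {M : Type*} [AddCommGroup M] [Module ℂ M] (t : List ℂ) (μ lam : ℂ)
    (F : ℂ → List ℂ → M) :
    ∑ i : Fin t.length, ((-1:ℂ)^(i:ℕ) / (μ - t.get i)) •
        ∑ k : Fin ((t.eraseIdx (i:ℕ)).length),
          (((-1:ℂ)^((k:ℕ)+1) / (lam - (t.eraseIdx (i:ℕ)).get k)) •
            F ((t.eraseIdx (i:ℕ)).get k) ((t.eraseIdx (i:ℕ)).eraseIdx (k:ℕ)))
    = ∑ j : Fin t.length, ((-1:ℂ)^((j:ℕ)+2) / (lam - t.get j)) •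
        ∑ k : Fin ((t.eraseIdx (j:ℕ)).length),
          (((-1:ℂ)^(k:ℕ) / (μ - (t.eraseIdx (j:ℕ)).get k)) •
            F (t.get j) ((t.eraseIdx (j:ℕ)).eraseIdx (k:ℕ))) := by
  have hL : ∀ i : Fin t.length,
      (∑ k : Fin ((t.eraseIdx (i:ℕ)).length),
        (((-1:ℂ)^((k:ℕ)+1) / (lam - (t.eraseIdx (i:ℕ)).get k)) •
          F ((t.eraseIdx (i:ℕ)).get k) ((t.eraseIdx (i:ℕ)).eraseIdx (k:ℕ))))
      = ∑ j ∈ Finset.univ.erase i,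
          (((-1:ℂ)^(((j:ℕ) - theta' (j:ℕ) (i:ℕ))+1) / (lam - t.get j)) •
            F (t.get j) (erase2' t (i:ℕ) (j:ℕ))) :=
    fun i => reindex t i (fun k x l => ((-1:ℂ)^(k+1) / (lam - x)) • F x l)
  have hR : ∀ j : Fin t.length,
      (∑ k : Fin ((t.eraseIdx (j:ℕ)).length),
        (((-1:ℂ)^(k:ℕ) / (μ - (t.eraseIdx (j:ℕ)).get k)) •
          F (t.get j) ((t.eraseIdx (j:ℕ)).eraseIdx (k:ℕ))))
      = ∑ i ∈ Finset.univ.erase j,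
          (((-1:ℂ)^((i:ℕ) - theta' (i:ℕ) (j:ℕ)) / (μ - t.get i)) •
            F (t.get j) (erase2' t (i:ℕ) (j:ℕ))) := by
    intro j
    have := reindex t j (fun k x _l => ((-1:ℂ)^k / (μ - x)) •
      F (t.get j) (erase2' t (j:ℕ) 0))
    -- can't use this directly since the list argument matters; use reindex with l
    have h2 := reindex t j (fun k x l => ((-1:ℂ)^k / (μ - x)) • F (t.get j) l)
    rw [h2]
    exact Finset.sum_congr rfl fun i _ => by rw [erase2'_comm]
  calc ∑ i : Fin t.length, ((-1:ℂ)^(i:ℕ) / (μ - t.get i)) •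
        ∑ k : Fin ((t.eraseIdx (i:ℕ)).length),
          (((-1:ℂ)^((k:ℕ)+1) / (lam - (t.eraseIdx (i:ℕ)).get k)) •
            F ((t.eraseIdx (i:ℕ)).get k) ((t.eraseIdx (i:ℕ)).eraseIdx (k:ℕ)))
      = ∑ i : Fin t.length, ∑ j ∈ Finset.univ.erase i,
          ((((-1:ℂ)^(i:ℕ) / (μ - t.get i)) *
            ((-1:ℂ)^(((j:ℕ) - theta' (j:ℕ) (i:ℕ))+1) / (lam - t.get j))) •
            F (t.get j) (erase2' t (i:ℕ) (j:ℕ))) := by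
        refine Finset.sum_congr rfl fun i _ => ?_
        rw [hL i, Finset.smul_sum]
        exact Finset.sum_congr rfl fun j _ => (smul_smul _ _ _)
    _ = ∑ j : Fin t.length, ∑ i ∈ Finset.univ.erase j,
          ((((-1:ℂ)^(i:ℕ) / (μ - t.get i)) *
            ((-1:ℂ)^(((j:ℕ) - theta' (j:ℕ) (i:ℕ))+1) / (lam - t.get j))) •
            F (t.get j) (erase2' t (i:ℕ) (j:ℕ))) := by
        exact Finset.sum_comm' (fun x y => by
          simp only [Finset.mem_univ, Finset.mem_erase, and_true, true_and, ne_eq]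
          exact ⟨fun h => Ne.symm h, fun h => Ne.symm h⟩)
    _ = ∑ j : Fin t.length, ((-1:ℂ)^((j:ℕ)+2) / (lam - t.get j)) •
        ∑ k : Fin ((t.eraseIdx (j:ℕ)).length),
          (((-1:ℂ)^(k:ℕ) / (μ - (t.eraseIdx (j:ℕ)).get k)) •
            F (t.get j) ((t.eraseIdx (j:ℕ)).eraseIdx (k:ℕ))) := by
        refine Finset.sum_congr rfl fun j _ => ?_
        rw [hR j, Finset.smul_sum]
        refine Finset.sum_congr rfl fun i hi => ?_
        rw [smul_smul]
        congr 1
        have hij : (i:ℕ) ≠ (j:ℕ) := by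
          simp only [Finset.mem_erase] at hi
          exact fun h => hi.1 (Fin.ext h)
        exact scalar_eq (i:ℕ) (j:ℕ) hij (μ - t.get i) (lam - t.get j)

section ExpandL
variable {A : Type*} [Ring A] [Algebra ℂ A]

theorem expandL (X v : ℂ → A) (t : List ℂ) (μ lam : ℂ)
    (hvv' : v lam * v μ = (-2/(lam - μ)) • (X lam - X μ) - v μ * v lam)
    (hXvμ : X μ * v lam = v lam * X μ)
    (ihT : v lam * Bop X v t = ((-1:ℂ)^t.length) • (Bop X v t * v lam) +
      (2:ℂ) • ∑ j : Fin t.length, (((-1:ℂ)^((j:ℕ)+1) / (lam - t.get j)) •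
        ((X lam - X (t.get j)) * Bop X v (t.eraseIdx (j:ℕ)))))
    (ihE : ∀ i : Fin t.length, v lam * Bop X v (t.eraseIdx (i:ℕ)) =
      ((-1:ℂ)^(t.eraseIdx (i:ℕ)).length) • (Bop X v (t.eraseIdx (i:ℕ)) * v lam) +
      (2:ℂ) • ∑ k : Fin ((t.eraseIdx (i:ℕ)).length),
        (((-1:ℂ)^((k:ℕ)+1) / (lam - (t.eraseIdx (i:ℕ)).get k)) •
          ((X lam - X ((t.eraseIdx (i:ℕ)).get k)) *
            Bop X v ((t.eraseIdx (i:ℕ)).eraseIdx (k:ℕ))))) :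
    v lam * Bop X v (μ :: t) =
      ((-1:ℂ)^(t.length+1)) • (v μ * (Bop X v t * v lam))
      + ((-1:ℂ)^(t.length+1) * 2) • (X μ * ∑ i : Fin t.length,
          (((-1:ℂ)^(i:ℕ)/(μ - t.get i)) • (Bop X v (t.eraseIdx (i:ℕ)) * v lam)))
      + (-2/(lam - μ)) • ((X lam - X μ) * Bop X v t)
      + (-2:ℂ) • ∑ j : Fin t.length, (((-1:ℂ)^((j:ℕ)+1)/(lam - t.get j)) •
          (v μ * ((X lam - X (t.get j)) * Bop X v (t.eraseIdx (j:ℕ)))))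
      + (4:ℂ) • (X μ * ∑ i : Fin t.length, (((-1:ℂ)^(i:ℕ) / (μ - t.get i)) •
          ∑ k : Fin ((t.eraseIdx (i:ℕ)).length),
            (((-1:ℂ)^((k:ℕ)+1) / (lam - (t.eraseIdx (i:ℕ)).get k)) •
              ((X lam - X ((t.eraseIdx (i:ℕ)).get k)) *
                Bop X v ((t.eraseIdx (i:ℕ)).eraseIdx (k:ℕ)))))) := by
  rw [show Bop X v (μ :: t) = v μ * Bop X v t +
      (2:ℂ) • (X μ * ∑ i : Fin t.length,
        (((-1:ℂ)^(i:ℕ) / (μ - t.get i)) • Bop X v (t.eraseIdx (i:ℕ)))) from by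
    rw [Bop]]
  rw [mul_add, mul_smul_comm, ← mul_assoc (v lam) (X μ), ← hXvμ, mul_assoc (X μ),
    mul_sum_smul]
  rw [← mul_assoc (v lam) (v μ), hvv', sub_mul, smul_mul_assoc,
    mul_assoc (v μ) (v lam), ihT]
  rw [mul_add (v μ), mul_smul_comm, mul_smul_comm, mul_sum_smul (v μ)]
  have hsum : (∑ i : Fin t.length, (((-1:ℂ)^(i:ℕ)/(μ - t.get i)) •
        (v lam * Bop X v (t.eraseIdx (i:ℕ)))))
      = ((-1:ℂ)^(t.length+1)) • (∑ i : Fin t.length,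
          (((-1:ℂ)^(i:ℕ)/(μ - t.get i)) • (Bop X v (t.eraseIdx (i:ℕ)) * v lam)))
        + (2:ℂ) • ∑ i : Fin t.length, (((-1:ℂ)^(i:ℕ) / (μ - t.get i)) •
          ∑ k : Fin ((t.eraseIdx (i:ℕ)).length),
            (((-1:ℂ)^((k:ℕ)+1) / (lam - (t.eraseIdx (i:ℕ)).get k)) •
              ((X lam - X ((t.eraseIdx (i:ℕ)).get k)) *
                Bop X v ((t.eraseIdx (i:ℕ)).eraseIdx (k:ℕ))))) := by
    rw [Finset.smul_sum, Finset.smul_sum, ← Finset.sum_add_distrib]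
    refine Finset.sum_congr rfl fun i _ => ?_
    rw [ihE i, smul_add, smul_smul, smul_smul, smul_smul, smul_smul]
    congr 1
    · congr 1
      have hlen : (t.eraseIdx (i:ℕ)).length = t.length - 1 := by
        simp [List.length_eraseIdx, i.isLt]
      rw [hlen, show t.length + 1 = (t.length-1)+2 from by have := i.isLt; omega,
        pow_add]
      ring
    · congr 1
      ring
  rw [hsum, mul_add (X μ), mul_smul_comm, mul_smul_comm]
  module

end ExpandL

section ExpandR
variable {A : Type*} [Ring A] [Algebra ℂ A]

theorem Bop_cons (X v : ℂ → A) (μ : ℂ) (rest : List ℂ) :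
    Bop X v (μ :: rest) = v μ * Bop X v rest +
      (2:ℂ) • (X μ * ∑ i : Fin rest.length,
        (((-1:ℂ)^(i:ℕ) / (μ - rest.get i)) • Bop X v (rest.eraseIdx (i:ℕ)))) := by
  rw [Bop]

theorem expandR (X v : ℂ → A) (t : List ℂ) (μ lam : ℂ)
    (hWvμ : ∀ j : Fin t.length,
      (X lam - X (t.get j)) * v μ = v μ * (X lam - X (t.get j)))
    (hWXμ : ∀ j : Fin t.length,
      (X lam - X (t.get j)) * X μ = X μ * (X lam - X (t.get j))) :
    ((-1:ℂ)^(μ::t).length) • (Bop X v (μ::t) * v lam) +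
      (2:ℂ) • ∑ j : Fin (μ::t).length,
        (((-1:ℂ)^((j:ℕ)+1) / (lam - (μ::t).get j)) •
          ((X lam - X ((μ::t).get j)) * Bop X v ((μ::t).eraseIdx (j:ℕ)))) =
      ((-1:ℂ)^(t.length+1)) • (v μ * (Bop X v t * v lam))
      + ((-1:ℂ)^(t.length+1) * 2) • (X μ * ∑ i : Fin t.length,
          (((-1:ℂ)^(i:ℕ)/(μ - t.get i)) • (Bop X v (t.eraseIdx (i:ℕ)) * v lam)))
      + (-2/(lam - μ)) • ((X lam - X μ) * Bop X v t)
      + (-2:ℂ) • ∑ j : Fin t.length, (((-1:ℂ)^((j:ℕ)+1)/(lam - t.get j)) •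
          (v μ * ((X lam - X (t.get j)) * Bop X v (t.eraseIdx (j:ℕ)))))
      + (4:ℂ) • (X μ * ∑ i : Fin t.length, (((-1:ℂ)^(i:ℕ) / (μ - t.get i)) •
          ∑ k : Fin ((t.eraseIdx (i:ℕ)).length),
            (((-1:ℂ)^((k:ℕ)+1) / (lam - (t.eraseIdx (i:ℕ)).get k)) •
              ((X lam - X ((t.eraseIdx (i:ℕ)).get k)) *
                Bop X v ((t.eraseIdx (i:ℕ)).eraseIdx (k:ℕ)))))) := by
  have hDS := DS t μ lam (fun x l => (X lam - X x) * Bop X v l)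
  rw [Bop_cons X v μ t]
  simp only [List.length_cons]
  rw [Fin.sum_univ_succ]
  simp only [List.get_cons_zero, List.get_cons_succ', Fin.val_zero, Fin.val_succ,
    List.eraseIdx_cons_zero, List.eraseIdx_cons_succ]
  have htail : ∑ k : Fin t.length, (((-1:ℂ)^(((k:ℕ)+1)+1) / (lam - t.get k)) •
        ((X lam - X (t.get k)) * Bop X v (μ :: t.eraseIdx (k:ℕ))))
      = (-1:ℂ) • ∑ j : Fin t.length, (((-1:ℂ)^((j:ℕ)+1)/(lam - t.get j)) •
          (v μ * ((X lam - X (t.get j)) * Bop X v (t.eraseIdx (j:ℕ)))))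
        + (2:ℂ) • (X μ * ∑ j : Fin t.length, ((-1:ℂ)^((j:ℕ)+2) / (lam - t.get j)) •
            ∑ k : Fin ((t.eraseIdx (j:ℕ)).length),
              (((-1:ℂ)^(k:ℕ) / (μ - (t.eraseIdx (j:ℕ)).get k)) •
                ((X lam - X (t.get j)) * Bop X v ((t.eraseIdx (j:ℕ)).eraseIdx (k:ℕ))))) := by
    rw [mul_sum_smul (X μ), Finset.smul_sum, Finset.smul_sum, ← Finset.sum_add_distrib]
    refine Finset.sum_congr rfl fun k _ => ?_
    rw [Bop_cons X v μ (t.eraseIdx (k:ℕ)), mul_add]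
    rw [← mul_assoc _ (v μ), hWvμ k, mul_assoc (v μ)]
    rw [mul_smul_comm, ← mul_assoc _ (X μ), hWXμ k, mul_assoc (X μ),
      mul_sum_smul (X lam - X (t.get k)), mul_sum_smul (X μ)]
    match_scalars <;> ring
  rw [htail, ← hDS]
  rw [add_mul, smul_mul_assoc, mul_assoc (v μ), mul_assoc (X μ),
    sum_smul_mul (v lam)]
  module

end ExpandR

section Key
variable {A : Type*} [Ring A] [Algebra ℂ A]

theorem key (D : Set ℂ) (X v : ℂ → A)
    (hXX : ∀ l ∈ D, ∀ m ∈ D, l ≠ m → X l * X m = X m * X l)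
    (hXv : ∀ l ∈ D, ∀ m ∈ D, l ≠ m → X l * v m = v m * X l)
    (hvv : ∀ l ∈ D, ∀ m ∈ D, l ≠ m →
      v l * v m + v m * v l = (-2/(l - m)) • (X l - X m)) :
    ∀ (N : ℕ) (l : List ℂ), l.length ≤ N → l.Pairwise (· ≠ ·) →
    (∀ ν ∈ l, ν ∈ D) → ∀ lam, lam ∈ D → (∀ ν ∈ l, lam ≠ ν) →
    v lam * Bop X v l =
      ((-1:ℂ)^l.length) • (Bop X v l * v lam) +
      (2:ℂ) • ∑ j : Fin l.length,
        (((-1:ℂ)^((j:ℕ)+1) / (lam - l.get j)) •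
          ((X lam - X (l.get j)) * Bop X v (l.eraseIdx (j:ℕ)))) := by
  intro N
  induction N with
  | zero =>
    intro l hl _ _ lam _ _
    have : l = [] := by
      cases l with
      | nil => rfl
      | cons a t => simp at hl
    subst this
    simp [Bop]
  | succ N ih =>
    intro l hl hpw hD lam hlamD hlam
    match l with
    | [] => simp [Bop]
    | μ :: t =>
      have hμD : μ ∈ D := hD μ (List.mem_cons_self)
      have htD : ∀ ν ∈ t, ν ∈ D := fun ν hν => hD ν (List.mem_cons_of_mem _ hν)
      have hμt : ∀ ν ∈ t, μ ≠ ν := (List.pairwise_cons.1 hpw).1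
      have htpw : t.Pairwise (· ≠ ·) := (List.pairwise_cons.1 hpw).2
      have hlamμ : lam ≠ μ := hlam μ (List.mem_cons_self)
      have hlamt : ∀ ν ∈ t, lam ≠ ν := fun ν hν => hlam ν (List.mem_cons_of_mem _ hν)
      have hlt : t.length ≤ N := by
        simp only [List.length_cons] at hl; omega
      have ihT := ih t hlt htpw htD lam hlamD hlamt
      have ihE : ∀ i : Fin t.length,
          v lam * Bop X v (t.eraseIdx (i:ℕ)) =
            ((-1:ℂ)^(t.eraseIdx (i:ℕ)).length) • (Bop X v (t.eraseIdx (i:ℕ)) * v lam) +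
            (2:ℂ) • ∑ k : Fin ((t.eraseIdx (i:ℕ)).length),
              (((-1:ℂ)^((k:ℕ)+1) / (lam - (t.eraseIdx (i:ℕ)).get k)) •
                ((X lam - X ((t.eraseIdx (i:ℕ)).get k)) *
                  Bop X v ((t.eraseIdx (i:ℕ)).eraseIdx (k:ℕ)))) := by
        intro i
        refine ih (t.eraseIdx (i:ℕ)) (le_trans (List.eraseIdx_sublist t (i:ℕ)).length_le hlt)
          (htpw.sublist (List.eraseIdx_sublist t (i:ℕ)))
          (fun ν hν => htD ν ((List.eraseIdx_sublist t (i:ℕ)).subset hν)) lam hlamD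
          (fun ν hν => hlamt ν ((List.eraseIdx_sublist t (i:ℕ)).subset hν))
      have hvv' : v lam * v μ = (-2/(lam - μ)) • (X lam - X μ) - v μ * v lam :=
        eq_sub_of_add_eq (hvv lam hlamD μ hμD hlamμ)
      have hXvμ : X μ * v lam = v lam * X μ := hXv μ hμD lam hlamD (Ne.symm hlamμ)
      have hWvμ : ∀ j : Fin t.length,
          (X lam - X (t.get j)) * v μ = v μ * (X lam - X (t.get j)) := by
        intro j
        have hjD : t.get j ∈ D := htD _ (t.get_mem j)
        have h1 := hXv lam hlamD μ hμD hlamμ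
        have h2 := hXv (t.get j) hjD μ hμD (Ne.symm (hμt _ (t.get_mem j)))
        rw [sub_mul, mul_sub, h1, h2]
      have hWXμ : ∀ j : Fin t.length,
          (X lam - X (t.get j)) * X μ = X μ * (X lam - X (t.get j)) := by
        intro j
        have hjD : t.get j ∈ D := htD _ (t.get_mem j)
        have h1 := hXX lam hlamD μ hμD hlamμ
        have h2 := hXX (t.get j) hjD μ hμD (Ne.symm (hμt _ (t.get_mem j)))
        rw [sub_mul, mul_sub, h1, h2]
      rw [expandL X v t μ lam hvv' hXvμ ihT ihE]
      rw [← expandR X v t μ lam hWvμ hWXμ]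

end Key

/-- Remove the entries at (0-based) positions `i` and `j` from the list `l`. -/
def erase2 (l : List ℂ) (i j : ℕ) : List ℂ := (l.eraseIdx (max i j)).eraseIdx (min i j)

/-- Θ(i − j) for the Heaviside function Θ (Θ(x) = 1 for x > 0, Θ(x) = 0 for x ≤ 0). -/
def theta (i j : ℕ) : ℕ := if j < i then 1 else 0

/-- commutation relation between v⁺(λ) and the creation operator B_M. -/
theorem vp_Bop_commutation {A : Type*} [Ring A] [Algebra ℂ A] (D : Set ℂ)
    (X v : ℂ → A)
    (hXX : ∀ l ∈ D, ∀ m ∈ D, l ≠ m → X l * X m = X m * X l)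
    (hXv : ∀ l ∈ D, ∀ m ∈ D, l ≠ m → X l * v m = v m * X l)
    (hvv : ∀ l ∈ D, ∀ m ∈ D, l ≠ m →
      v l * v m + v m * v l = (-2/(l - m)) • (X l - X m))
    (μs : List ℂ) (hM : μs ≠ [])
    (hdist : μs.Pairwise (· ≠ ·)) (hD : ∀ ν ∈ μs, ν ∈ D)
    (lam : ℂ) (hlamD : lam ∈ D) (hlam : ∀ ν ∈ μs, lam ≠ ν) :
    v lam * Bop X v μs =
      ((-1:ℂ)^μs.length) • (Bop X v μs * v lam) +
      (2:ℂ) • ∑ j : Fin μs.length,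
        (((-1:ℂ)^((j:ℕ)+1) / (lam - μs.get j)) •
          ((X lam - X (μs.get j)) * Bop X v (μs.eraseIdx (j:ℕ)))) := by
  exact key D X v hXX hXv hvv μs.length μs le_rfl hdist hD lam hlamD hlam
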